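/- Suppose that for every x ∈ [0,1] the map g∘g is differentiable at x within [0,1] and its derivative there is at most 1. Then g∘g has exactly one fixed point in [0,1]. -/
import Mathlib


/-- if g∘g is differentiable within [0,1] at every point of [0,1] with derivative
at most 1, then g∘g has exactly one fixed point in [0,1]. -/
theorem gg_unique_fixed_point_of_deriv_le_one
    (χ : ℕ → ℝ) (hχ_nonneg : ∀ m, 0 ≤ χ m) (hχ_sum : ∑' m, χ m = 1) (hχ0 : χ 0 < 1)
    (p q : ℝ) (hp : 0 ≤ p) (hq : 0 ≤ q) (hpq0 : 0 < p + q) (hpq1 : p + q < 1)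
    (G : ℝ → ℝ) (hG : ∀ x, G x = ∑' m, χ m * x ^ m)
    (g : ℝ → ℝ) (hg : ∀ x, g x = (1 - q) - (1 - p - q) * G x)
    (hderiv : ∀ x ∈ Set.Icc (0 : ℝ) 1,
      ∃ d, HasDerivWithinAt (g ∘ g) d (Set.Icc (0 : ℝ) 1) x ∧ d ≤ 1) :
    ∃! x, x ∈ Set.Icc (0 : ℝ) 1 ∧ (g ∘ g) x = x := by
  have hsum : Summable χ := by
    by_contra h
    rw [tsum_eq_zero_of_not_summable h] at hχ_sum
    norm_num at hχ_sum
  have hχle1 : ∀ m, χ m ≤ 1 := by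
    intro m
    rw [← hχ_sum]
    exact Summable.le_tsum hsum m (fun j _ => hχ_nonneg j)
  have hpq' : 0 < 1 - p - q := by linarith
  -- summability of the series at x ∈ [0,1]
  have hsumx : ∀ x : ℝ, 0 ≤ x → x ≤ 1 → Summable (fun m => χ m * x ^ m) := by
    intro x hx0 hx1
    refine Summable.of_nonneg_of_le (fun m => mul_nonneg (hχ_nonneg m) (pow_nonneg hx0 m))
      (fun m => ?_) hsum
    calc χ m * x ^ m ≤ χ m * 1 := by
          exact mul_le_mul_of_nonneg_left (pow_le_one₀ hx0 hx1) (hχ_nonneg m)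
      _ = χ m := mul_one _
  -- bounds for G on [0,1]
  have hGnn : ∀ x : ℝ, 0 ≤ x → 0 ≤ G x := by
    intro x hx0
    rw [hG]
    exact tsum_nonneg fun m => mul_nonneg (hχ_nonneg m) (pow_nonneg hx0 m)
  have hGle : ∀ x : ℝ, 0 ≤ x → x ≤ 1 → G x ≤ 1 := by
    intro x hx0 hx1
    rw [hG, ← hχ_sum]
    refine Summable.tsum_le_tsum (fun m => ?_) (hsumx x hx0 hx1) hsum
    calc χ m * x ^ m ≤ χ m * 1 :=
          mul_le_mul_of_nonneg_left (pow_le_one₀ hx0 hx1) (hχ_nonneg m)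
      _ = χ m := mul_one _
  have hGpos : ∀ x : ℝ, 0 < x → x ≤ 1 → 0 < G x := by
    intro x hx0 hx1
    obtain ⟨m, hm⟩ : ∃ m, 0 < χ m := by
      by_contra h
      push_neg at h
      have : ∀ m, χ m = 0 := fun m => le_antisymm (h m) (hχ_nonneg m)
      simp [this] at hχ_sum
    have h1 : χ m * x ^ m ≤ G x := by
      rw [hG]
      exact Summable.le_tsum (hsumx x hx0.le hx1) m
        (fun j _ => mul_nonneg (hχ_nonneg j) (pow_nonneg hx0.le j))
    have h2 : 0 < χ m * x ^ m := mul_pos hm (pow_pos hx0 m)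
    linarith
  -- bounds for g on [0,1]
  have hglb : ∀ x : ℝ, 0 ≤ x → x ≤ 1 → p ≤ g x := by
    intro x hx0 hx1
    have := hGle x hx0 hx1
    rw [hg]
    nlinarith
  have hgub : ∀ x : ℝ, 0 ≤ x → x ≤ 1 → g x ≤ 1 - q := by
    intro x hx0 hx1
    have := hGnn x hx0
    rw [hg]
    nlinarith
  have hglt1 : ∀ x : ℝ, 0 < x → x ≤ 1 → g x < 1 - q := by
    intro x hx0 hx1
    have := hGpos x hx0 hx1
    rw [hg]
    nlinarith
  have hgmem : ∀ x : ℝ, 0 ≤ x → x ≤ 1 → (0 ≤ g x ∧ g x ≤ 1) :=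
    fun x hx0 hx1 => ⟨le_trans hp (hglb x hx0 hx1), by linarith [hgub x hx0 hx1]⟩
  -- the auxiliary function φ x = g (g x) - x
  set f : ℝ → ℝ := g ∘ g with hf
  have hfmem : ∀ x : ℝ, 0 ≤ x → x ≤ 1 → p ≤ f x ∧ f x ≤ 1 - q := by
    intro x hx0 hx1
    obtain ⟨h1, h2⟩ := hgmem x hx0 hx1
    exact ⟨hglb _ h1 h2, hgub _ h1 h2⟩
  set φ : ℝ → ℝ := fun x => f x - x with hφ
  have hφcont : ContinuousOn φ (Set.Icc (0:ℝ) 1) := by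
    intro x hx
    obtain ⟨d, hd, _⟩ := hderiv x hx
    exact (hd.continuousWithinAt).sub continuousWithinAt_id
  -- existence of a fixed point
  have hφ0 : 0 ≤ φ 0 := by
    have := (hfmem 0 le_rfl zero_le_one).1
    simp only [hφ]
    linarith
  have hφ1 : φ 1 ≤ 0 := by
    have := (hfmem 1 zero_le_one le_rfl).2
    simp only [hφ]
    linarith
  obtain ⟨c, hc, hc0⟩ : ∃ c ∈ Set.Icc (0:ℝ) 1, φ c = 0 := by
    have h0 : (0:ℝ) ∈ Set.Icc (φ 1) (φ 0) := ⟨hφ1, hφ0⟩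
    obtain ⟨c, hc, hceq⟩ := intermediate_value_Icc' zero_le_one hφcont h0
    exact ⟨c, hc, hceq⟩
  have hcfix : f c = c := by
    have := hc0
    simp only [hφ] at this
    linarith
  -- φ is antitone on [0,1]
  have hφanti : AntitoneOn φ (Set.Icc (0:ℝ) 1) := by
    have hderiv' : ∀ x ∈ Set.Ioo (0:ℝ) 1, HasDerivAt φ (deriv φ x) x ∧ deriv φ x ≤ 0 := by
      intro x hx
      obtain ⟨d, hd, hd1⟩ := hderiv x (Set.Ioo_subset_Icc_self hx)
      have hdx : HasDerivAt f d x := hd.hasDerivAt (Icc_mem_nhds hx.1 hx.2)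
      have hφx : HasDerivAt φ (d - 1) x := hdx.sub (hasDerivAt_id x)
      constructor
      · rw [hφx.deriv]; exact hφx
      · rw [hφx.deriv]; linarith
    refine antitoneOn_of_deriv_nonpos (convex_Icc 0 1) hφcont ?_ ?_
    · rw [interior_Icc]
      exact fun x hx => ((hderiv' x hx).1.differentiableAt).differentiableWithinAt
    · rw [interior_Icc]
      exact fun x hx => (hderiv' x hx).2
  -- analyticity of G on (-1,1)
  have hGanal : ∀ x : ℝ, |x| < 1 → AnalyticAt ℝ G x := by
    intro x hx
    set P : FormalMultilinearSeries ℝ ℝ ℝ := FormalMultilinearSeries.ofScalars ℝ χ with hP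
    have hrad : (1 : ENNReal) ≤ P.radius := by
      have := P.le_radius_of_bound 1 (r := 1) (fun n => by
        rw [hP, FormalMultilinearSeries.ofScalars_norm]
        simp only [NNReal.coe_one, one_pow, mul_one, Real.norm_eq_abs,
          abs_of_nonneg (hχ_nonneg n)]
        exact hχle1 n)
      simpa using this
    have hball : HasFPowerSeriesOnBall P.sum P 0 P.radius :=
      P.hasFPowerSeriesOnBall (lt_of_lt_of_le one_pos hrad)
    have hGeq : G = P.sum := by
      funext y
      rw [hG, FormalMultilinearSeries.sum]
      refine tsum_congr fun n => ?_
      rw [hP, FormalMultilinearSeries.ofScalars_apply_eq]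
      simp [mul_comm]
    rw [hGeq]
    refine hball.analyticAt_of_mem ?_
    rw [mem_emetric_ball_zero_iff]
    calc (‖x‖₊ : ENNReal) < 1 := by
          rw [← ENNReal.coe_one, ENNReal.coe_lt_coe]
          simpa [← NNReal.coe_lt_coe, Real.norm_eq_abs] using hx
      _ ≤ P.radius := hrad
  have hganal : ∀ x : ℝ, |x| < 1 → AnalyticAt ℝ g x := by
    intro x hx
    have : g = fun y => (1 - q) - (1 - p - q) * G y := funext hg
    rw [this]
    exact analyticAt_const.sub (analyticAt_const.mul (hGanal x hx))
  have hFanal : AnalyticOnNhd ℝ (fun x => f x - x) (Set.Ioo (0:ℝ) 1) := by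
    intro x hx
    have hx' : |x| < 1 := abs_lt.mpr ⟨by linarith [hx.1], hx.2⟩
    have hgx : |g x| < 1 := by
      have h1 := hglb x hx.1.le hx.2.le
      have h2 := hglt1 x hx.1 hx.2.le
      exact abs_lt.mpr ⟨by linarith, by linarith⟩
    exact ((hganal (g x) hgx).comp (hganal x hx')).sub analyticAt_id
  -- uniqueness
  refine ⟨c, ⟨hc, hcfix⟩, ?_⟩
  rintro y ⟨hy, hyfix⟩
  by_contra hne
  -- two distinct fixed points a < b
  obtain ⟨a, b, ha, hb, hafix, hbfix, hab⟩ :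
      ∃ a b : ℝ, a ∈ Set.Icc (0:ℝ) 1 ∧ b ∈ Set.Icc (0:ℝ) 1 ∧ f a = a ∧ f b = b ∧ a < b := by
    rcases lt_or_gt_of_ne hne with h | h
    · exact ⟨y, c, hy, hc, hyfix, hcfix, h⟩
    · exact ⟨c, y, hc, hy, hcfix, hyfix, h⟩
  -- φ vanishes on [a,b], so f = id on [a,b]
  have hEq : ∀ x ∈ Set.Icc a b, f x = x := by
    intro x hx
    have hxI : x ∈ Set.Icc (0:ℝ) 1 := ⟨le_trans ha.1 hx.1, le_trans hx.2 hb.2⟩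
    have h1 : φ x ≤ φ a := hφanti ha hxI hx.1
    have h2 : φ b ≤ φ x := hφanti hxI hb hx.2
    simp only [hφ] at h1 h2
    linarith [hafix, hbfix]
  -- identity theorem: f = id on (0,1)
  have hmid : (a + b) / 2 ∈ Set.Ioo (0:ℝ) 1 := by
    constructor
    · have := ha.1; linarith
    · have := hb.2; linarith
  have hev : (fun x => f x - x) =ᶠ[nhds ((a + b) / 2)] 0 := by
    have hnb : Set.Ioo a b ∈ nhds ((a + b) / 2) :=
      Ioo_mem_nhds (by linarith) (by linarith)
    filter_upwards [hnb] with x hx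
    have := hEq x (Set.Ioo_subset_Icc_self hx)
    simp [this]
  have hEqAll : Set.EqOn (fun x => f x - x) 0 (Set.Ioo (0:ℝ) 1) :=
    hFanal.eqOn_zero_of_preconnected_of_eventuallyEq_zero
      (isPreconnected_Ioo) hmid hev
  -- contradiction using p + q > 0
  rcases lt_or_ge 0 p with hppos | hple
  · have hx0 : (p/2 : ℝ) ∈ Set.Ioo (0:ℝ) 1 := ⟨by linarith, by linarith⟩
    have h1 := hEqAll hx0
    have h2 := (hfmem (p/2) hx0.1.le hx0.2.le).1
    simp only [Pi.zero_apply, sub_eq_zero] at h1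
    rw [h1] at h2
    linarith
  · have hqpos : 0 < q := by linarith
    have hx0 : (1 - q/2 : ℝ) ∈ Set.Ioo (0:ℝ) 1 := ⟨by linarith, by linarith⟩
    have h1 := hEqAll hx0
    have h2 := (hfmem (1 - q/2) hx0.1.le hx0.2.le).2
    simp only [Pi.zero_apply, sub_eq_zero] at h1
    rw [h1] at h2
    linarith
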